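/- Let V_I ∈ ℝ^{n×p_I}, V_J ∈ ℝ^{n×p_J} with V_II and V_JJ positive definite, and let Y ∈ ℝⁿ. Then θ̂_I(0) = V_II⁻¹V_I⊤Y, and the map ρ ↦ θ̂_I(ρ) (defined for ρ in a neighborhood of 0 on which G(ρ) is invertible) is differentiable at ρ = 0 with derivative V_II⁻¹V_IJV_JJ⁻¹V_J⊤Y − V_II⁻¹V_I⊤Y. Consequently θ̂_I(ρ) = (1−ρ)·V_II⁻¹V_I⊤Y + ρ·V_II⁻¹V_IJV_JJ⁻¹V_J⊤Y + o(ρ) as ρ → 0. -/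

import Mathlib

open Matrix Asymptotics Filter Topology

/-- The block matrix `G(ρ) = [[(1+ρ)V_II, −ρ V_IJ], [−ρ V_JI, (1+ρ)V_JJ]]`. -/
def mlG {n pI pJ : ℕ} (VI : Matrix (Fin n) (Fin pI) ℝ)
    (VJ : Matrix (Fin n) (Fin pJ) ℝ) (ρ : ℝ) :
    Matrix (Fin pI ⊕ Fin pJ) (Fin pI ⊕ Fin pJ) ℝ :=
  Matrix.fromBlocks ((1 + ρ) • (VIᵀ * VI)) ((-ρ) • (VIᵀ * VJ))
    ((-ρ) • (VJᵀ * VI)) ((1 + ρ) • (VJᵀ * VJ))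

/-- The mutual-learning estimator `θ̂_I(ρ)`: the first block of
`G(ρ)⁻¹ (V_Iᵀ Y; V_Jᵀ Y)`. -/
noncomputable def mlThetaHatI {n pI pJ : ℕ} (VI : Matrix (Fin n) (Fin pI) ℝ)
    (VJ : Matrix (Fin n) (Fin pJ) ℝ) (Y : Fin n → ℝ) (ρ : ℝ) : Fin pI → ℝ :=
  fun i => ((mlG VI VJ ρ)⁻¹ *ᵥ Sum.elim (VIᵀ *ᵥ Y) (VJᵀ *ᵥ Y)) (Sum.inl i)

attribute [local instance] Matrix.linftyOpNormedRing Matrix.linftyOpNormedAlgebra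

noncomputable local instance mlCompleteSpace {k : ℕ} :
    CompleteSpace (Matrix (Fin k) (Fin k) ℝ) :=
  FiniteDimensional.complete ℝ _

/-- The linear map `M ↦ ((M *ᵥ b) ∘ Sum.inl)`. -/
noncomputable def mlL {pI pJ : ℕ} (b : Fin pI ⊕ Fin pJ → ℝ) :
    Matrix (Fin pI ⊕ Fin pJ) (Fin pI ⊕ Fin pJ) ℝ →ₗ[ℝ] (Fin pI → ℝ) where
  toFun M := fun i => (M *ᵥ b) (Sum.inl i)
  map_add' M N := by funext i; simp [Matrix.add_mulVec]
  map_smul' c M := by funext i; simp [Matrix.smul_mulVec]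

set_option maxHeartbeats 1000000 in
/-- With `V_II` and `V_JJ` positive definite:
`θ̂_I(0) = V_II⁻¹ V_Iᵀ Y`; `ρ ↦ θ̂_I(ρ)` is differentiable at `0` with derivative
`V_II⁻¹ V_IJ V_JJ⁻¹ V_Jᵀ Y − V_II⁻¹ V_Iᵀ Y`; consequently
`θ̂_I(ρ) = (1−ρ) V_II⁻¹ V_Iᵀ Y + ρ V_II⁻¹ V_IJ V_JJ⁻¹ V_Jᵀ Y + o(ρ)` as `ρ → 0`. -/
theorem mlThetaHatI_deriv_at_zero
    (n pI pJ : ℕ) (VI : Matrix (Fin n) (Fin pI) ℝ) (VJ : Matrix (Fin n) (Fin pJ) ℝ)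
    (hI : (VIᵀ * VI).PosDef) (hJ : (VJᵀ * VJ).PosDef) (Y : Fin n → ℝ) :
    mlThetaHatI VI VJ Y 0 = (VIᵀ * VI)⁻¹ *ᵥ (VIᵀ *ᵥ Y) ∧
    HasDerivAt (fun ρ => mlThetaHatI VI VJ Y ρ)
      ((VIᵀ * VI)⁻¹ *ᵥ ((VIᵀ * VJ) *ᵥ ((VJᵀ * VJ)⁻¹ *ᵥ (VJᵀ *ᵥ Y)))
        - (VIᵀ * VI)⁻¹ *ᵥ (VIᵀ *ᵥ Y)) 0 ∧
    (fun ρ => mlThetaHatI VI VJ Y ρ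
        - ((1 - ρ) • ((VIᵀ * VI)⁻¹ *ᵥ (VIᵀ *ᵥ Y))
          + ρ • ((VIᵀ * VI)⁻¹ *ᵥ ((VIᵀ * VJ) *ᵥ ((VJᵀ * VJ)⁻¹ *ᵥ (VJᵀ *ᵥ Y))))))
      =o[𝓝 (0 : ℝ)] (fun ρ => ρ) := by
  classical
  set A := VIᵀ * VI with hA
  set B := VIᵀ * VJ with hB
  set Bt := VJᵀ * VI with hBt
  set C := VJᵀ * VJ with hC
  set b : Fin pI ⊕ Fin pJ → ℝ := Sum.elim (VIᵀ *ᵥ Y) (VJᵀ *ᵥ Y) with hb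
  set G0 : Matrix (Fin pI ⊕ Fin pJ) (Fin pI ⊕ Fin pJ) ℝ := Matrix.fromBlocks A 0 0 C with hG0
  set D : Matrix (Fin pI ⊕ Fin pJ) (Fin pI ⊕ Fin pJ) ℝ := Matrix.fromBlocks A (-B) (-Bt) C
    with hD
  have hAdet : IsUnit A.det := isUnit_iff_ne_zero.mpr (ne_of_gt hI.det_pos)
  have hCdet : IsUnit C.det := isUnit_iff_ne_zero.mpr (ne_of_gt hJ.det_pos)
  -- G(ρ) = G0 + ρ • D
  have hGeq : ∀ ρ : ℝ, mlG VI VJ ρ = G0 + ρ • D := by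
    intro ρ
    rw [hG0, hD, Matrix.fromBlocks_smul, Matrix.fromBlocks_add, mlG]
    simp only [add_smul, one_smul, zero_add, smul_neg, neg_smul]
    rfl
  -- G0 inverse
  have hG0inv : G0⁻¹ = Matrix.fromBlocks A⁻¹ 0 0 C⁻¹ := by
    apply Matrix.inv_eq_right_inv
    rw [hG0, Matrix.fromBlocks_multiply]
    simp [Matrix.mul_nonsing_inv _ hAdet, Matrix.mul_nonsing_inv _ hCdet,
      Matrix.fromBlocks_one]
  have hG0unit : IsUnit G0 := by
    rw [Matrix.isUnit_iff_isUnit_det, hG0, Matrix.det_fromBlocks_zero₂₁]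
    exact hAdet.mul hCdet
  -- θ̂_I(0)
  have hmlG0 : mlG VI VJ 0 = G0 := by rw [hGeq 0]; simp
  have hbv : G0⁻¹ *ᵥ b = Sum.elim (A⁻¹ *ᵥ (VIᵀ *ᵥ Y)) (C⁻¹ *ᵥ (VJᵀ *ᵥ Y)) := by
    rw [hG0inv, hb, Matrix.fromBlocks_mulVec]
    simp
  have h0 : mlThetaHatI VI VJ Y 0 = A⁻¹ *ᵥ (VIᵀ *ᵥ Y) := by
    funext i
    show ((mlG VI VJ 0)⁻¹ *ᵥ b) (Sum.inl i) = _
    rw [hmlG0, hbv]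
    rfl
  -- the derivative matrix
  have hDerivMat : -(G0⁻¹ * D * G0⁻¹) =
      Matrix.fromBlocks (-(A⁻¹ * A * A⁻¹)) (A⁻¹ * B * C⁻¹) (C⁻¹ * Bt * A⁻¹)
        (-(C⁻¹ * C * C⁻¹)) := by
    rw [hG0inv, hD, Matrix.fromBlocks_multiply, Matrix.fromBlocks_multiply,
      Matrix.fromBlocks_neg]
    simp [Matrix.mul_smul, Matrix.smul_mul, Matrix.mul_assoc]
  -- derivative of ρ ↦ G(ρ)⁻¹
  have hu := hG0unit.unit_spec
  have hinv : HasDerivAt (fun ρ : ℝ => (mlG VI VJ ρ)⁻¹) (-(G0⁻¹ * D * G0⁻¹)) 0 := by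
    have h1 : HasFDerivAt Ring.inverse
        (-ContinuousLinearMap.mulLeftRight ℝ _ (G0⁻¹) (G0⁻¹)) G0 := by
      have := hasFDerivAt_ringInverse (𝕜 := ℝ) hG0unit.unit
      rwa [hu, Matrix.coe_units_inv, hu] at this
    have h2 : HasDerivAt (fun ρ : ℝ => G0 + ρ • D) D 0 := by
      have h := ((hasDerivAt_id (0:ℝ)).smul_const D).const_add G0
      simp only [id_eq, id, one_smul] at h
      exact h
    have h1' : HasFDerivAt Ring.inverse
        (-ContinuousLinearMap.mulLeftRight ℝ _ (G0⁻¹) (G0⁻¹)) (G0 + (0:ℝ) • D) := by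
      simpa using h1
    have h3 := h1'.comp_hasDerivAt (0:ℝ) h2
    have h4 : HasDerivAt (fun ρ : ℝ => Ring.inverse (G0 + ρ • D))
        (-(G0⁻¹ * D * G0⁻¹)) 0 := by
      simp [ContinuousLinearMap.mulLeftRight_apply, mul_assoc] at h3 ⊢
      exact h3
    refine h4.congr_of_eventuallyEq (Filter.Eventually.of_forall fun ρ => ?_)
    show (mlG VI VJ ρ)⁻¹ = Ring.inverse (G0 + ρ • D)
    rw [hGeq ρ, Matrix.nonsing_inv_eq_ringInverse]
  -- transfer through the linear map
  set L := mlL (pI := pI) (pJ := pJ) b with hL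
  have hLcont : Continuous L := LinearMap.continuous_of_finiteDimensional L
  have hmain : HasDerivAt (fun ρ => mlThetaHatI VI VJ Y ρ)
      (L (-(G0⁻¹ * D * G0⁻¹))) 0 := by
    have h5 := (LinearMap.toContinuousLinearMap L).hasFDerivAt.comp_hasDerivAt 0 hinv
    exact h5
  -- identify the derivative value
  have hLval : L (-(G0⁻¹ * D * G0⁻¹)) =
      A⁻¹ *ᵥ (B *ᵥ (C⁻¹ *ᵥ (VJᵀ *ᵥ Y))) - A⁻¹ *ᵥ (VIᵀ *ᵥ Y) := by
    funext i
    rw [hDerivMat]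
    have h6 : -(A⁻¹ * A * A⁻¹) = -A⁻¹ := by
      rw [Matrix.nonsing_inv_mul _ hAdet, Matrix.one_mul]
    rw [h6, hL]
    show ((Matrix.fromBlocks (-A⁻¹) (A⁻¹ * B * C⁻¹) (C⁻¹ * Bt * A⁻¹)
        (-(C⁻¹ * C * C⁻¹)) *ᵥ b) (Sum.inl i)) = _
    rw [hb, Matrix.fromBlocks_mulVec]
    simp [Matrix.neg_mulVec, ← Matrix.mulVec_mulVec, Pi.sub_apply, sub_eq_neg_add, add_comm]
  rw [hLval] at hmain
  refine ⟨h0, hmain, ?_⟩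
  -- little-o expansion
  have h7 := (hasDerivAt_iff_isLittleO.mp hmain)
  refine h7.congr' (Filter.Eventually.of_forall fun ρ => ?_) (Filter.Eventually.of_forall fun ρ => by simp)
  rw [h0]
  have : (1 - ρ) • (A⁻¹ *ᵥ (VIᵀ *ᵥ Y)) + ρ • (A⁻¹ *ᵥ (B *ᵥ (C⁻¹ *ᵥ (VJᵀ *ᵥ Y)))) =
      A⁻¹ *ᵥ (VIᵀ *ᵥ Y) + (ρ - 0) • (A⁻¹ *ᵥ (B *ᵥ (C⁻¹ *ᵥ (VJᵀ *ᵥ Y))) - A⁻¹ *ᵥ (VIᵀ *ᵥ Y)) := by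
    rw [sub_zero, smul_sub, sub_smul, one_smul]
    abel
  simp only [this]
  abel
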